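/- Let X → Y → Z → X⟦1⟧ be a distinguished triangle in 𝒞 that is thin, i.e. m(Y) = m(X) + m(Z), with connecting morphism w : Z → X⟦1⟧. Let f : X → X' be any morphism, and let X' → W → Z → X'⟦1⟧ be any distinguished triangle whose connecting morphism Z → X'⟦1⟧ is the composite w ≫ f⟦1⟧. Then this second triangle is also thin: m(W) = m(X') + m(Z). -/

import Mathlib

open CategoryTheory Category Limits Pretriangulated

/-- If `X → Y → Z → X⟦1⟧` is a thin distinguished triangle (i.e. `m Y = m X + m Z`)
with connecting morphism `w : Z ⟶ X⟦1⟧`, `f : X ⟶ X'` is any morphism, and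
`X' → W → Z → X'⟦1⟧` is any distinguished triangle with connecting morphism
`w ≫ f⟦1⟧'`, then the second triangle is also thin: `m W = m X' + m Z`. -/
theorem thin_ET1 {C : Type*} [Category C] [Preadditive C] [HasZeroObject C]
    [HasShift C ℤ] [∀ n : ℤ, (CategoryTheory.shiftFunctor C n).Additive]
    [Pretriangulated C] [IsTriangulated C] [HasBinaryBiproducts C]
    (m : C → ℝ)
    (hiso : ∀ {X Y : C}, (X ≅ Y) → m X = m Y)
    (hadd : ∀ X Y : C, m (X ⊞ Y) = m X + m Y)
    (hshift : ∀ X : C, m (X⟦(1 : ℤ)⟧) = m X)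
    (htri : ∀ T : Triangle C, T ∈ (distTriang C) → m T.obj₂ ≤ m T.obj₁ + m T.obj₃)
    {X Y Z X' W : C} (u : X ⟶ Y) (v : Y ⟶ Z) (w : Z ⟶ X⟦(1 : ℤ)⟧)
    (hT : Triangle.mk u v w ∈ distTriang C)
    (hthin : m Y = m X + m Z)
    (f : X ⟶ X') (a : X' ⟶ W) (b : W ⟶ Z)
    (hT' : Triangle.mk a b (w ≫ f⟦(1 : ℤ)⟧') ∈ distTriang C) :
    m W = m X' + m Z := by
  -- the cone of `biprod.lift u f : X ⟶ Y ⊞ X'`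
  obtain ⟨Q, p, q, hQ⟩ := distinguished_cocone_triangle (biprod.lift u f)
  -- the split triangle `X' ⟶ Y ⊞ X' ⟶ Y`
  have hB : Triangle.mk (biprod.inr : X' ⟶ Y ⊞ X') biprod.fst 0 ∈ distTriang C := by
    refine isomorphic_distinguished _ (binaryBiproductTriangle_distinguished X' Y) _ ?_
    exact Triangle.isoMk _ _ (Iso.refl _) (biprod.braiding Y X') (Iso.refl _)
      (by dsimp [Triangle.mk, binaryBiproductTriangle]; ext <;> simp) (by dsimp [Triangle.mk, binaryBiproductTriangle]; simp) (by dsimp [Triangle.mk, binaryBiproductTriangle]; simp)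
  have h23 : Triangle.mk (biprod.fst : Y ⊞ X' ⟶ Y) (0 : Y ⟶ X'⟦(1 : ℤ)⟧)
      (-((biprod.inr : X' ⟶ Y ⊞ X')⟦(1 : ℤ)⟧')) ∈ distTriang C :=
    rot_of_distTriang _ hB
  have comm : biprod.lift u f ≫ biprod.fst = u := by simp
  -- the octahedron on `biprod.lift u f ≫ biprod.fst = u`
  let oct := Triangulated.someOctahedron comm hQ h23 hT
  -- identify `oct.m₃`
  have hm3 : oct.m₃ = -(w ≫ f⟦(1 : ℤ)⟧') := by
    have h4 := oct.comm₄
    have h5 := congrArg (fun g => g ≫ (biprod.snd : Y ⊞ X' ⟶ X')⟦(1 : ℤ)⟧') h4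
    simp only [assoc, ← Functor.map_comp, biprod.lift_snd, Preadditive.neg_comp,
      Preadditive.comp_neg, biprod.inr_snd] at h5
    rw [CategoryTheory.Functor.map_id, comp_id] at h5
    rw [h5, neg_neg]
  have hTQ := oct.mem
  set γ := (-((biprod.inr : X' ⟶ Y ⊞ X')⟦(1 : ℤ)⟧')) ≫ p⟦(1 : ℤ)⟧' with hγ
  -- fix the signs
  have hTQ' : Triangle.mk (-oct.m₁) (w ≫ f⟦(1 : ℤ)⟧') γ ∈ distTriang C := by
    refine isomorphic_distinguished _ hTQ _ ?_
    refine Triangle.isoMk _ _ (Iso.refl Q) ⟨-𝟙 Z, -𝟙 Z, by dsimp [Triangle.mk]; simp, by dsimp [Triangle.mk]; simp⟩ (Iso.refl _)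
      ?_ ?_ ?_
    · dsimp [Triangle.mk]; simp
    · dsimp [Triangle.mk]; rw [comp_id, hm3]; simp
    · dsimp [Triangle.mk]; simp
  -- compare with the rotations of the triangle `X' ⟶ W ⟶ Z`
  have hR1 := rot_of_distTriang _ hTQ'
  have hR2 := rot_of_distTriang _ (rot_of_distTriang _ hT')
  have e2 := isoTriangleOfIso₁₂ _ _ hR1 hR2 (Iso.refl Z) (Iso.refl (X'⟦(1 : ℤ)⟧))
    (by dsimp [Triangle.mk, Triangle.rotate]; rw [comp_id, id_comp])
  have hQW : m Q = m W := by
    have h6 := hiso (Triangle.π₃.mapIso e2)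
    dsimp [Triangle.mk, Triangle.rotate, Triangle.π₃] at h6
    rw [hshift, hshift] at h6
    exact h6
  -- conclude
  have h1 : m (Y ⊞ X') ≤ m X + m Q := htri _ hQ
  rw [hadd] at h1
  have h2 : m W ≤ m X' + m Z := htri _ hT'
  have h3 : m X' ≤ m W + m Z := by
    have := htri _ hR2
    dsimp [Triangle.mk, Triangle.rotate] at this
    rw [hshift, hshift] at this
    linarith
  rw [hthin] at h1
  linarith
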